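/- Validity of harmonic interpolation with a single stop curve (strict bounds): let Ω_h ⊂ ℤ² be finite, Γ_h ⊆ Ω_h nonempty, set S = Ω_h \ Γ_h, and assume S is nonempty and 4-connected, every 4-neighbor of every point of S lies in S ∪ ∂Ω_h ∪ Γ_h, and both ∂Ω_h and Γ_h contain a 4-neighbor of some point of S. Let t > 0 and let T satisfy Δ_h T = 0 on S (five-point Laplacian), T = 0 on ∂Ω_h, and T = t on Γ_h. Then 0 < T(p) < t for every p ∈ S. -/

import Mathlib

/-- `q` is one of the four 4-neighbors of `p` in `ℤ²`. -/
def IsNbr (p q : ℤ × ℤ) : Prop :=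
  q = p + (1, 0) ∨ q = p - (1, 0) ∨ q = p + (0, 1) ∨ q = p - (0, 1)

/-- Five-point discrete Laplacian on `ℤ²`. -/
def discLap (T : ℤ × ℤ → ℝ) (p : ℤ × ℤ) : ℝ :=
  T (p + (1, 0)) + T (p - (1, 0)) + T (p + (0, 1)) + T (p - (0, 1)) - 4 * T p

/-- Discrete boundary of a finite set `S ⊂ ℤ²`: points outside `S` having a
4-neighbor in `S`. -/
def discBdry (S : Finset (ℤ × ℤ)) : Set (ℤ × ℤ) :=
  {p | p ∉ S ∧ ∃ q ∈ S, IsNbr p q}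

/-- `S` is 4-connected: any two of its points are joined by a path within `S`
whose consecutive points are 4-neighbors. -/
def Connected4 (S : Finset (ℤ × ℤ)) : Prop :=
  ∀ a ∈ S, ∀ b ∈ S,
    Relation.ReflTransGen (fun p q => p ∈ S ∧ q ∈ S ∧ IsNbr p q) a b

/-- If `T` is discrete harmonic at `p` and bounded above by `c` on all
possible neighbor locations, and `T p = c`, then every neighbor equals `c`. -/
lemma max_propagate (Ωh Γh : Finset (ℤ × ℤ))
    (hcl : ∀ p ∈ Ωh \ Γh, ∀ q : ℤ × ℤ, IsNbr p q →
      q ∈ Ωh \ Γh ∨ q ∈ discBdry Ωh ∨ q ∈ Γh)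
    (T : ℤ × ℤ → ℝ) (c : ℝ)
    (hharm : ∀ p ∈ Ωh \ Γh, discLap T p = 0)
    (hub : ∀ q : ℤ × ℤ, (q ∈ Ωh \ Γh ∨ q ∈ discBdry Ωh ∨ q ∈ Γh) → T q ≤ c) :
    ∀ p ∈ Ωh \ Γh, T p = c → ∀ q : ℤ × ℤ, IsNbr p q → T q = c := by
  intro p hp hpc q hq
  have h := hharm p hp
  unfold discLap at h
  have h1 : T (p + (1, 0)) ≤ c := hub _ (hcl p hp _ (Or.inl rfl))
  have h2 : T (p - (1, 0)) ≤ c := hub _ (hcl p hp _ (Or.inr (Or.inl rfl)))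
  have h3 : T (p + (0, 1)) ≤ c := hub _ (hcl p hp _ (Or.inr (Or.inr (Or.inl rfl))))
  have h4 : T (p - (0, 1)) ≤ c := hub _ (hcl p hp _ (Or.inr (Or.inr (Or.inr rfl))))
  rcases hq with rfl | rfl | rfl | rfl <;> linarith

/-- Propagation of the extremal value along 4-connected components. -/
lemma all_eq (Ωh Γh : Finset (ℤ × ℤ)) (hconn : Connected4 (Ωh \ Γh))
    (hcl : ∀ p ∈ Ωh \ Γh, ∀ q : ℤ × ℤ, IsNbr p q →
      q ∈ Ωh \ Γh ∨ q ∈ discBdry Ωh ∨ q ∈ Γh)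
    (T : ℤ × ℤ → ℝ) (c : ℝ)
    (hharm : ∀ p ∈ Ωh \ Γh, discLap T p = 0)
    (hub : ∀ q : ℤ × ℤ, (q ∈ Ωh \ Γh ∨ q ∈ discBdry Ωh ∨ q ∈ Γh) → T q ≤ c)
    (p₀ : ℤ × ℤ) (hp₀ : p₀ ∈ Ωh \ Γh) (hc : T p₀ = c) :
    ∀ b ∈ Ωh \ Γh, T b = c := by
  intro b hb
  have h := hconn p₀ hp₀ b hb
  clear hb
  induction h with
  | refl => exact hc
  | tail hstep hnbr ih =>
    obtain ⟨hx, hy, hq⟩ := hnbr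
    exact max_propagate Ωh Γh hcl T c hharm hub _ hx ih _ hq

theorem harmonic_interpolation_single_curve_strict_bounds
    (Ωh Γh : Finset (ℤ × ℤ)) (hΓΩ : Γh ⊆ Ωh) (hΓne : Γh.Nonempty)
    (hSne : (Ωh \ Γh).Nonempty) (hconn : Connected4 (Ωh \ Γh))
    (hcl : ∀ p ∈ Ωh \ Γh, ∀ q : ℤ × ℤ, IsNbr p q →
      q ∈ Ωh \ Γh ∨ q ∈ discBdry Ωh ∨ q ∈ Γh)
    (hadj_bd : ∃ p ∈ Ωh \ Γh, ∃ q ∈ discBdry Ωh, IsNbr p q)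
    (hadj_Γ : ∃ p ∈ Ωh \ Γh, ∃ q ∈ Γh, IsNbr p q)
    (t : ℝ) (ht : 0 < t)
    (T : ℤ × ℤ → ℝ)
    (hharm : ∀ p ∈ Ωh \ Γh, discLap T p = 0)
    (hbd : ∀ q ∈ discBdry Ωh, T q = 0)
    (hΓval : ∀ q ∈ Γh, T q = t) :
    ∀ p ∈ Ωh \ Γh, 0 < T p ∧ T p < t := by
  -- upper bound
  have hupper : ∀ p ∈ Ωh \ Γh, T p < t := by
    obtain ⟨p₀, hp₀, hmax⟩ := Finset.exists_max_image (Ωh \ Γh) T hSne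
    have hlt : T p₀ < t := by
      by_contra hcon
      push_neg at hcon
      have hub : ∀ q : ℤ × ℤ, (q ∈ Ωh \ Γh ∨ q ∈ discBdry Ωh ∨ q ∈ Γh) →
          T q ≤ T p₀ := by
        rintro q (hq | hq | hq)
        · exact hmax q hq
        · rw [hbd q hq]; linarith
        · rw [hΓval q hq]; linarith
      have hall := all_eq Ωh Γh hconn hcl T (T p₀) hharm hub p₀ hp₀ rfl
      obtain ⟨a, ha, q, hqb, hnbr⟩ := hadj_bd
      have hq := max_propagate Ωh Γh hcl T (T p₀) hharm hub a ha (hall a ha) q hnbr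
      rw [hbd q hqb] at hq
      linarith
    intro p hp
    exact lt_of_le_of_lt (hmax p hp) hlt
  -- lower bound
  have hlower : ∀ p ∈ Ωh \ Γh, 0 < T p := by
    obtain ⟨p₁, hp₁, hmin⟩ := Finset.exists_min_image (Ωh \ Γh) T hSne
    have hharm' : ∀ p ∈ Ωh \ Γh, discLap (fun x => -T x) p = 0 := by
      intro p hp
      have h := hharm p hp
      unfold discLap at h
      show -T (p + (1, 0)) + -T (p - (1, 0)) + -T (p + (0, 1)) + -T (p - (0, 1))
        - 4 * -T p = 0
      linarith
    have hgt : 0 < T p₁ := by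
      by_contra hcon
      push_neg at hcon
      have hub : ∀ q : ℤ × ℤ, (q ∈ Ωh \ Γh ∨ q ∈ discBdry Ωh ∨ q ∈ Γh) →
          (fun x => -T x) q ≤ (fun x => -T x) p₁ := by
        rintro q (hq | hq | hq) <;> simp only
        · have := hmin q hq; linarith
        · rw [hbd q hq]; linarith
        · rw [hΓval q hq]; linarith
      have hall := all_eq Ωh Γh hconn hcl (fun x => -T x) (-T p₁) hharm' hub p₁ hp₁ rfl
      obtain ⟨a, ha, q, hqΓ, hnbr⟩ := hadj_Γ
      have hq := max_propagate Ωh Γh hcl (fun x => -T x) (-T p₁) hharm' hub a ha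
        (hall a ha) q hnbr
      rw [hΓval q hqΓ] at hq
      linarith
    intro p hp
    exact lt_of_lt_of_le hgt (hmin p hp)
  exact fun p hp => ⟨hlower p hp, hupper p hp⟩
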